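/- For all l, r ∈ H' and all σ ∈ ℝ^n_+, with C_σ := C·max{1,σ_1,…,σ_n}, the error of the Galerkin-approximated measurement satisfies |𝓕_{l,r}(σ) − F_{l,r}(σ)| ≤ C_σ · ‖u_σ^l − ũ_σ^l‖ · ‖u_σ^r − ũ_σ^r‖; in particular, for l = r one has 0 ≤ 𝓕_{l,l}(σ) − F_{l,l}(σ) ≤ C_σ · ‖u_σ^l − ũ_σ^l‖². -/
import Mathlib


open scoped BigOperators


theorem cs_aux {H : Type*} [AddCommGroup H] [Module ℝ H] (B : H → H → ℝ)
    (hadd : ∀ x z y : H, B (x + z) y = B x y + B z y)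
    (hsmul : ∀ (t : ℝ) (x y : H), B (t • x) y = t * B x y)
    (hsymm : ∀ x y : H, B x y = B y x)
    (hpos : ∀ v : H, 0 ≤ B v v) (x y : H) :
    (B x y) ^ 2 ≤ B x x * B y y := by
  have hq : ∀ t : ℝ, 0 ≤ B y y * (t * t) + (2 * B x y) * t + B x x := by
    intro t
    have e1 : B (x + t • y) (x + t • y)
        = B y y * (t * t) + (2 * B x y) * t + B x x := by
      rw [hadd, hsmul, hsymm x (x + t • y), hadd, hsmul, hsymm y (x + t • y),
        hadd, hsmul, hsymm y x]
      ring
    have := hpos (x + t • y)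
    rw [e1] at this; linarith
  have hd := discrim_le_zero hq
  unfold discrim at hd
  nlinarith [hd]


/-- For all `l, r ∈ H'` and all `σ ∈ ℝ^n_+`, with
`C_σ := C·max{1,σ_1,…,σ_n}`, the error of the Galerkin-approximated measurement
satisfies `|𝓕_{l,r}(σ) − F_{l,r}(σ)| ≤ C_σ·‖u_σ^l − ũ_σ^l‖·‖u_σ^r − ũ_σ^r‖`;
in particular, for `l = r` one has
`0 ≤ 𝓕_{l,l}(σ) − F_{l,l}(σ) ≤ C_σ·‖u_σ^l − ũ_σ^l‖²`. -/
theorem stmt_16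
    {H : Type*} [NormedAddCommGroup H] [InnerProductSpace ℝ H] [CompleteSpace H]
    {n : ℕ}
    (b0 : H →L[ℝ] H →L[ℝ] ℝ) (b : Fin n → H →L[ℝ] H →L[ℝ] ℝ)
    (hb0symm : ∀ u v : H, b0 u v = b0 v u)
    (hb0pos : ∀ v : H, 0 ≤ b0 v v)
    (hbsymm : ∀ i, ∀ u v : H, b i u v = b i v u)
    (hbpos : ∀ i, ∀ v : H, 0 ≤ b i v v)
    (C β : ℝ) (hβ : 0 < β) (hCβ : β ≤ C)
    (hcoer : ∀ v : H, β * ‖v‖ ^ 2 ≤ b0 v v + ∑ i, b i v v)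
    (hbound : ∀ v : H, b0 v v + ∑ i, b i v v ≤ C * ‖v‖ ^ 2)
    (u : (Fin n → ℝ) → (H →L[ℝ] ℝ) → H)
    (hu : ∀ σ : Fin n → ℝ, (∀ i, 0 < σ i) → ∀ l : H →L[ℝ] ℝ,
      ∀ v : H, b0 (u σ l) v + ∑ i, σ i * b i (u σ l) v = l v)
    (V : Submodule ℝ H) [FiniteDimensional ℝ V]
    (ut : (Fin n → ℝ) → (H →L[ℝ] ℝ) → H)
    (hmem : ∀ σ l, ut σ l ∈ V)
    (hut : ∀ σ : Fin n → ℝ, (∀ i, 0 < σ i) → ∀ l : H →L[ℝ] ℝ,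
      ∀ v ∈ V, b0 (ut σ l) v + ∑ i, σ i * b i (ut σ l) v = l v) :
    ∀ l r : H →L[ℝ] ℝ, ∀ σ : Fin n → ℝ, (∀ i, 0 < σ i) →
      |r (u σ l) - r (ut σ l)| ≤
        C * max 1 (⨆ i, σ i) * ‖u σ l - ut σ l‖ * ‖u σ r - ut σ r‖ ∧
      0 ≤ l (u σ l) - l (ut σ l) ∧
      l (u σ l) - l (ut σ l) ≤ C * max 1 (⨆ i, σ i) * ‖u σ l - ut σ l‖ ^ 2 := by
  intro l r σ hσ
  set M : ℝ := max 1 (⨆ i, σ i) with hM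
  have hM1 : (1 : ℝ) ≤ M := le_max_left _ _
  have hσM : ∀ i, σ i ≤ M := fun i =>
    le_trans (le_ciSup (Set.Finite.bddAbove (Set.finite_range σ)) i) (le_max_right _ _)
  -- the bilinear form
  set B : H → H → ℝ := fun x y => b0 x y + ∑ i, σ i * b i x y with hB
  have hBadd : ∀ x z y : H, B (x + z) y = B x y + B z y := by
    intro x z y
    simp only [hB, map_add, ContinuousLinearMap.add_apply, mul_add, Finset.sum_add_distrib]
    ring
  have hBsmul : ∀ (t : ℝ) (x y : H), B (t • x) y = t * B x y := by
    intro t x y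
    simp only [hB, map_smul, ContinuousLinearMap.smul_apply, smul_eq_mul,
      Finset.mul_sum, mul_add]
    ring_nf
  have hBsub : ∀ x z y : H, B (x - z) y = B x y - B z y := by
    intro x z y
    have := hBadd (x - z) z y
    simp only [sub_add_cancel] at this
    linarith
  have hBsymm : ∀ x y : H, B x y = B y x := by
    intro x y
    simp only [hB, hb0symm x y]
    congr 1
    exact Finset.sum_congr rfl fun i _ => by rw [hbsymm i x y]
  have hBpos : ∀ v : H, 0 ≤ B v v := by
    intro v
    have : ∀ i ∈ Finset.univ, (0:ℝ) ≤ σ i * b i v v := fun i _ =>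
      mul_nonneg (hσ i).le (hbpos i v)
    exact add_nonneg (hb0pos v) (Finset.sum_nonneg this)
  have hBbound : ∀ v : H, B v v ≤ C * M * ‖v‖ ^ 2 := by
    intro v
    have h1 : B v v ≤ M * (b0 v v + ∑ i, b i v v) := by
      simp only [hB, mul_add, Finset.mul_sum]
      apply add_le_add
      · nlinarith [hb0pos v]
      · exact Finset.sum_le_sum fun i _ =>
          mul_le_mul_of_nonneg_right (hσM i) (hbpos i v)
    calc B v v ≤ M * (b0 v v + ∑ i, b i v v) := h1
      _ ≤ M * (C * ‖v‖ ^ 2) := by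
          apply mul_le_mul_of_nonneg_left (hbound v) (by linarith)
      _ = C * M * ‖v‖ ^ 2 := by ring
  set el : H := u σ l - ut σ l with hel
  set er : H := u σ r - ut σ r with her
  -- Galerkin orthogonality
  have horth : ∀ (p : H →L[ℝ] ℝ), ∀ v ∈ V, B (u σ p - ut σ p) v = 0 := by
    intro p v hv
    rw [hBsub]
    have h1 : B (u σ p) v = p v := hu σ hσ p v
    have h2 : B (ut σ p) v = p v := hut σ hσ p v hv
    rw [h1, h2, sub_self]
  -- key identity: p (e_q) = B e_p e_q
  have hkey : ∀ p q : H →L[ℝ] ℝ,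
      p (u σ q) - p (ut σ q) = B (u σ p - ut σ p) (u σ q - ut σ q) := by
    intro p q
    have h1 : B (u σ p) (u σ q - ut σ q) = p (u σ q - ut σ q) := hu σ hσ p _
    have h2 : B (ut σ p) (u σ q - ut σ q) = 0 := by
      rw [hBsymm]
      have := horth q (ut σ p) (hmem σ p)
      linarith [this]
    rw [hBsub, h1, h2, map_sub]
    ring
  have hCM : 0 ≤ C * M := mul_nonneg (by linarith) (by linarith)
  -- Cauchy-Schwarz
  have hcs := cs_aux B hBadd hBsmul hBsymm hBpos er el
  have hbl := hBbound el
  have hbr := hBbound er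
  have habs : |B er el| ≤ C * M * ‖el‖ * ‖er‖ := by
    have h2 : (B er el) ^ 2 ≤ (C * M * ‖el‖ * ‖er‖) ^ 2 := by
      calc (B er el) ^ 2 ≤ B er er * B el el := hcs
        _ ≤ (C * M * ‖er‖ ^ 2) * (C * M * ‖el‖ ^ 2) :=
            mul_le_mul hbr hbl (hBpos el) (by positivity)
        _ = (C * M * ‖el‖ * ‖er‖) ^ 2 := by ring
    have hrhs : 0 ≤ C * M * ‖el‖ * ‖er‖ := by positivity
    nlinarith [abs_nonneg (B er el), sq_abs (B er el)]
  refine ⟨?_, ?_, ?_⟩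
  · rw [hkey r l]
    exact habs
  · rw [hkey l l]
    exact hBpos el
  · rw [hkey l l]
    calc B el el ≤ C * M * ‖el‖ ^ 2 := hbl
      _ = C * M * ‖el‖ ^ 2 := rfl
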